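/- Every entry of the matrix B(n) = Q^n - I_4, where Q is the 4×4 integer companion matrix of z^4 - 7z^3 + 12z^2 - 7z + 1, is an integer linear combination of the three integers a = (-u+v)/2, b = (n-v)/3, c = u/3, where u = 2·T_n(5/2) - 2 and v = U_{n-1}(5/2); in particular, the ideal of Z generated by the entries of B(n) equals the ideal generated by a, b, c, and hence gcd of all entries of B(n) equals gcd(n, u, v)/gcd(n, 3). -/

import Mathlib

/-- Grand algebraic identities for the sequences. -/
theorem seq_grand (u v : ℕ → ℤ)
    (hu0 : u 0 = 0) (hu1 : u 1 = 3)
    (hurec : ∀ k : ℕ, u (k + 2) = 5 * u (k + 1) - u k + 6)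
    (hv0 : v 0 = 0) (hv1 : v 1 = 1)
    (hvrec : ∀ k : ℕ, v (k + 2) = 5 * v (k + 1) - v k) :
    ∀ r : ℕ,
      v (r+1) * v (r+1) - 5 * v (r+1) * v r + v r * v r = 1 ∧
      u r = 2 * v (r+1) - 5 * v r - 2 ∧
      u (r+1) = 2 * v (r+2) - 5 * v (r+1) - 2 ∧
      v (2*r) = v r * (2 * v (r+1) - 5 * v r) ∧
      v (2*r+1) = v (r+1) * v (r+1) - v r * v r ∧
      v (3*r) = 21 * (v r)^3 + 3 * v r ∧
      v (3*r+1) = (v (r+1))^3 - 3*(v r)^2 * v (r+1) + 5*(v r)^3 ∧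
      v (3*r+2) = 5*(v (r+1))^3 - 3*(v r)*(v (r+1))^2 + (v r)^3 := by
  intro r
  induction r with
  | zero =>
    have h2 : v 2 = 5 * v 1 - v 0 := hvrec 0
    refine ⟨?_, ?_, ?_, ?_, ?_, ?_, ?_, ?_⟩ <;>
      simp only [Nat.mul_zero, Nat.zero_add, Nat.mul_one] <;>
      rw [hv0, hv1] at * <;>
      first
        | (rw [hu0]; ring)
        | (rw [hu1, h2, hv0, hv1]; ring)
        | (rw [h2, hv0, hv1]; ring)
        | ring
  | succ r ih =>
    obtain ⟨hJ, hU0, hU1, hD0, hD1, hT0, hT1, hT2⟩ := ih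
    have hr : v (r+2) = 5 * v (r+1) - v r := hvrec r
    have hr1 : v (r+3) = 5 * v (r+2) - v (r+1) := hvrec (r+1)
    have hJ' : v (r+1+1) * v (r+1+1) - 5 * v (r+1+1) * v (r+1) + v (r+1) * v (r+1) = 1 := by
      rw [show r+1+1 = r+2 by ring, hr]; linear_combination hJ
    have hU0' : u (r+1) = 2 * v (r+1+1) - 5 * v (r+1) - 2 := hU1
    have hU1' : u (r+1+1) = 2 * v (r+1+2) - 5 * v (r+1+1) - 2 := by
      rw [show r+1+1 = r+2 by ring, show r+1+2 = r+3 by ring, hurec r, hU0, hU1, hr1, hr]; ring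
    have hD0' : v (2*(r+1)) = v (r+1) * (2 * v (r+1+1) - 5 * v (r+1)) := by
      rw [show 2*(r+1) = 2*r+2 by ring, show r+1+1 = r+2 by ring, hvrec (2*r), hD1, hD0, hr]
      ring
    have hD1' : v (2*(r+1)+1) = v (r+1+1) * v (r+1+1) - v (r+1) * v (r+1) := by
      rw [show 2*(r+1)+1 = 2*r+1+2 by ring, show r+1+1 = r+2 by ring, hvrec (2*r+1),
        show 2*r+1+1 = 2*(r+1) by ring, hD0', hD1, hr]
      ring
    have hT0' : v (3*(r+1)) = 21 * (v (r+1))^3 + 3 * v (r+1) := by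
      rw [show 3*(r+1) = 3*r+1+2 by ring, hvrec (3*r+1), hT2, hT1]
      linear_combination 3 * v (r+1) * hJ
    have hT1' : v (3*(r+1)+1) = (v (r+1+1))^3 - 3*(v (r+1))^2 * v (r+1+1) + 5*(v (r+1))^3 := by
      rw [show 3*(r+1)+1 = 3*r+2+2 by ring, show r+1+1 = r+2 by ring, hvrec (3*r+2),
        show 3*r+2+1 = 3*(r+1) by ring, hT0', hT2, hr]
      linear_combination (-15) * v (r+1) * hJ
    have hT2' : v (3*(r+1)+2) = 5*(v (r+1+1))^3 - 3*(v (r+1))*(v (r+1+1))^2 + (v (r+1))^3 := by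
      rw [show 3*(r+1)+2 = 3*(r+1)+2 by rfl, show (3*(r+1)+2) = (3*(r+1))+2 by ring,
        hvrec (3*(r+1)), show 3*(r+1)+1 = 3*r+2+2 by ring, show r+1+1 = r+2 by ring] at *
      rw [hvrec (3*r+2), show 3*r+2+1 = 3*(r+1) by ring, hT0', hT2, hr]
      linear_combination (-72) * v (r+1) * hJ
    exact ⟨hJ', hU0', hU1', hD0', hD1', hT0', hT1', hT2'⟩

theorem seq_mod (u v : ℕ → ℤ)
    (hu0 : u 0 = 0) (hu1 : u 1 = 3)
    (hurec : ∀ k : ℕ, u (k + 2) = 5 * u (k + 1) - u k + 6)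
    (hv0 : v 0 = 0) (hv1 : v 1 = 1)
    (hvrec : ∀ k : ℕ, v (k + 2) = 5 * v (k + 1) - v k) :
    ∀ m : ℕ, u (3*m) % 18 = 0 ∧ u (3*m+1) % 18 = 3 ∧ u (3*m+2) % 18 = 3 ∧
      v (3*m) % 6 = 0 ∧ v (3*m+1) % 6 = 1 ∧ v (3*m+2) % 6 = 5 := by
  intro m
  induction m with
  | zero =>
    have h2 : u 2 = 5 * u 1 - u 0 + 6 := hurec 0
    have h2' : v 2 = 5 * v 1 - v 0 := hvrec 0
    simp only [Nat.mul_zero, Nat.zero_add]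
    rw [hu0, hu1] at *
    rw [hv0, hv1] at *
    omega
  | succ m ih =>
    obtain ⟨h0, h1, h2, g0, g1, g2⟩ := ih
    have e1 : u (3*m+1+2) = 5 * u (3*m+2) - u (3*m+1) + 6 := by
      have := hurec (3*m+1); rwa [show 3*m+1+1 = 3*m+2 by ring] at this
    have e2 : u (3*m+2+2) = 5 * u (3*m+1+2) - u (3*m+2) + 6 := by
      have := hurec (3*m+2); rwa [show 3*m+2+1 = 3*m+1+2 by ring] at this
    have e3 : u (3*m+2+2+1) = 5 * u (3*m+2+2) - u (3*m+1+2) + 6 := by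
      have := hurec (3*m+3); rwa [show 3*m+3+2 = 3*m+2+2+1 by ring,
        show 3*m+3+1 = 3*m+2+2 by ring, show 3*m+3 = 3*m+1+2 by ring] at this
    have f1 : v (3*m+1+2) = 5 * v (3*m+2) - v (3*m+1) := by
      have := hvrec (3*m+1); rwa [show 3*m+1+1 = 3*m+2 by ring] at this
    have f2 : v (3*m+2+2) = 5 * v (3*m+1+2) - v (3*m+2) := by
      have := hvrec (3*m+2); rwa [show 3*m+2+1 = 3*m+1+2 by ring] at this
    have f3 : v (3*m+2+2+1) = 5 * v (3*m+2+2) - v (3*m+1+2) := by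
      have := hvrec (3*m+3); rwa [show 3*m+3+2 = 3*m+2+2+1 by ring,
        show 3*m+3+1 = 3*m+2+2 by ring, show 3*m+3 = 3*m+1+2 by ring] at this
    rw [show 3*(m+1) = 3*m+1+2 by ring]
    rw [show 3*m+1+2+1 = 3*m+2+2 by ring, show 3*m+1+2+2 = 3*m+2+2+1 by ring]
    omega

theorem seq_P2 (u v : ℕ → ℤ)
    (hd0 : ∀ r : ℕ, v (2*r) = v r * (u r + 2))
    (hd1 : ∀ r : ℕ, u (2*r) = 21 * (v r * v r))
    (hpar : ∀ m : ℕ, 3 ∣ m → (2:ℤ) ∣ v m ∧ (2:ℤ) ∣ u m) :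
    ∀ s M : ℕ, 3 ∣ M →
      (2:ℤ)^(s+1) ∣ v (2^s * M) ∧ (2:ℤ)^(s+1) ∣ u (2^s * M) := by
  intro s
  induction s with
  | zero =>
    intro M hM
    simpa [pow_one] using hpar M hM
  | succ s ih =>
    intro M hM
    obtain ⟨hv2, hu2⟩ := ih M hM
    set r := 2^s * M with hr
    have hidx : 2^(s+1) * M = 2 * r := by rw [hr]; ring
    constructor
    · rw [hidx, hd0 r]
      have h2u : (2:ℤ) ∣ u r + 2 := by
        have : (2:ℤ) ∣ u r := dvd_trans (dvd_pow_self 2 (Nat.succ_ne_zero s)) hu2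
        omega
      calc (2:ℤ)^(s+1+1) = 2^(s+1) * 2 := by ring
        _ ∣ v r * (u r + 2) := mul_dvd_mul hv2 h2u
    · rw [hidx, hd1 r]
      have : (2:ℤ)^(s+1+1) ∣ v r * v r := by
        calc (2:ℤ)^(s+1+1) ∣ 2^(s+1) * 2^(s+1) := by
              rw [← pow_add]; exact pow_dvd_pow 2 (by omega)
          _ ∣ v r * v r := mul_dvd_mul hv2 hv2
      exact Dvd.dvd.mul_left this 21

theorem seq_P3 (v : ℕ → ℤ)
    (ht0 : ∀ r : ℕ, v (3*r) = 21*(v r)^3 + 3*(v r))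
    (hv3 : ∀ m : ℕ, ∃ z : ℤ, v m = (m:ℤ) + 3*z) :
    ∀ t M : ℕ, ¬(3 ∣ M) →
      ∃ e : ℤ, v (3^(t+1) * M) = 2*3^(t+1)*(M:ℤ) + 3^(t+2)*e := by
  intro t
  induction t with
  | zero =>
    intro M hM
    obtain ⟨z, hz⟩ := hv3 M
    have hk : ∃ k : ℤ, (M:ℤ)*(M:ℤ) = 1 + 3*k := by
      have h1 : M % 3 = 1 ∨ M % 3 = 2 := by omega
      have h2 := Nat.div_add_mod M 3
      rcases h1 with h | h
      · exact ⟨3*(M/3:ℕ)^2 + 2*(M/3:ℕ), by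
          have : (M:ℤ) = 3*(M/3:ℕ) + 1 := by push_cast; omega
          rw [this]; ring⟩
      · exact ⟨3*(M/3:ℕ)^2 + 4*(M/3:ℕ) + 1, by
          have : (M:ℤ) = 3*(M/3:ℕ) + 2 := by push_cast; omega
          rw [this]; ring⟩
    obtain ⟨k, hk⟩ := hk
    refine ⟨2*(M:ℤ) + 7*(M:ℤ)*k + 21*(M:ℤ)^2*z + 63*(M:ℤ)*z^2 + 63*z^3 + z, ?_⟩
    rw [show 3^(0+1) * M = 3 * M from by ring, ht0 M, hz]
    push_cast
    linear_combination 21*(M:ℤ)*hk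
  | succ t ih =>
    intro M hM
    obtain ⟨e, he⟩ := ih M hM
    refine ⟨e + 7*3^(2*t+1)*(2*(M:ℤ)+3*e)^3, ?_⟩
    rw [show 3^(t+1+1) * M = 3 * (3^(t+1) * M) from by ring, ht0 (3^(t+1)*M), he]
    push_cast
    ring

set_option maxHeartbeats 1000000

private theorem mQ0 : (!![-2,11,-7,1; -1,5,-1,0; 0,-1,5,-1; 1,-7,11,-2] : Matrix (Fin 4) (Fin 4) ℤ) *
    !![0, 1, 0, 0; 0, 0, 1, 0; 0, 0, 0, 1; -1, 7, -12, 7] =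
    !![-2,11,-7,1; -1,5,-1,0; 0,-1,5,-1; 1,-7,11,-2] + !![1,-6,6,-1; 1,-6,6,-1; 1,-6,6,-1; 1,-6,6,-1] := by
  ext i j
  fin_cases i <;> fin_cases j <;>
    simp [Matrix.mul_apply, Fin.sum_univ_succ, Matrix.cons_val_succ, Matrix.head_cons,
      Matrix.vecTail, Matrix.vecHead, Matrix.add_apply]

private theorem mQ1 : (!![1,-6,6,-1; 1,-6,6,-1; 1,-6,6,-1; 1,-6,6,-1] : Matrix (Fin 4) (Fin 4) ℤ) *
    !![0, 1, 0, 0; 0, 0, 1, 0; 0, 0, 0, 1; -1, 7, -12, 7] =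
    !![1,-6,6,-1; 1,-6,6,-1; 1,-6,6,-1; 1,-6,6,-1] := by
  ext i j
  fin_cases i <;> fin_cases j <;>
    simp [Matrix.mul_apply, Fin.sum_univ_succ, Matrix.cons_val_succ, Matrix.head_cons,
      Matrix.vecTail, Matrix.vecHead]

private theorem mQ2 : (!![-24,53,-34,5; -5,11,-7,1; -1,2,-1,0; 0,-1,2,-1] : Matrix (Fin 4) (Fin 4) ℤ) *
    !![0, 1, 0, 0; 0, 0, 1, 0; 0, 0, 0, 1; -1, 7, -12, 7] =
    -(!![5,-11,7,-1; 1,-2,1,0; 0,1,-2,1; -1,7,-11,5]) := by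
  ext i j
  fin_cases i <;> fin_cases j <;>
    simp [Matrix.mul_apply, Fin.sum_univ_succ, Matrix.cons_val_succ, Matrix.head_cons,
      Matrix.vecTail, Matrix.vecHead, Matrix.neg_apply]

private theorem mQ3 : (!![5,-11,7,-1; 1,-2,1,0; 0,1,-2,1; -1,7,-11,5] : Matrix (Fin 4) (Fin 4) ℤ) *
    !![0, 1, 0, 0; 0, 0, 1, 0; 0, 0, 0, 1; -1, 7, -12, 7] =
    !![-24,53,-34,5; -5,11,-7,1; -1,2,-1,0; 0,-1,2,-1] + (5:ℤ) • !![5,-11,7,-1; 1,-2,1,0; 0,1,-2,1; -1,7,-11,5] := by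
  ext i j
  fin_cases i <;> fin_cases j <;>
    simp [Matrix.mul_apply, Fin.sum_univ_succ, Matrix.cons_val_succ, Matrix.head_cons,
      Matrix.vecTail, Matrix.vecHead, Matrix.add_apply, Matrix.smul_apply]

private theorem mQ4 : (!![-2,11,-7,1; -1,5,-1,0; 0,-1,5,-1; 1,-7,11,-2] : Matrix (Fin 4) (Fin 4) ℤ)
    + !![5,-11,7,-1; 1,-2,1,0; 0,1,-2,1; -1,7,-11,5] = (3:ℤ) • (1 : Matrix (Fin 4) (Fin 4) ℤ) := by
  ext i j
  fin_cases i <;> fin_cases j <;>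
    simp [Matrix.cons_val_succ, Matrix.head_cons, Matrix.vecTail, Matrix.vecHead,
      Matrix.add_apply, Matrix.smul_apply, Matrix.one_apply]

theorem mat_form (v : ℕ → ℤ)
    (hv0 : v 0 = 0) (hv1 : v 1 = 1)
    (hvrec : ∀ k : ℕ, v (k + 2) = 5 * v (k + 1) - v k) :
    ∀ n : ℕ, (3:ℤ) • ((!![0, 1, 0, 0; 0, 0, 1, 0; 0, 0, 0, 1; -1, 7, -12, 7] :
      Matrix (Fin 4) (Fin 4) ℤ) ^ n) =
      (!![-2,11,-7,1; -1,5,-1,0; 0,-1,5,-1; 1,-7,11,-2] : Matrix (Fin 4) (Fin 4) ℤ)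
      + (n:ℤ) • (!![1,-6,6,-1; 1,-6,6,-1; 1,-6,6,-1; 1,-6,6,-1] : Matrix (Fin 4) (Fin 4) ℤ)
      + (v n) • (!![-24,53,-34,5; -5,11,-7,1; -1,2,-1,0; 0,-1,2,-1] : Matrix (Fin 4) (Fin 4) ℤ)
      + (v (n+1)) • (!![5,-11,7,-1; 1,-2,1,0; 0,1,-2,1; -1,7,-11,5] : Matrix (Fin 4) (Fin 4) ℤ) := by
  intro n
  induction n with
  | zero =>
    simp only [pow_zero, Nat.cast_zero, hv0, hv1, zero_smul, add_zero, zero_add, one_smul]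
    rw [← mQ4]
  | succ n ih =>
    have step : (3:ℤ) • (!![0, 1, 0, 0; 0, 0, 1, 0; 0, 0, 0, 1; -1, 7, -12, 7] :
        Matrix (Fin 4) (Fin 4) ℤ) ^ (n+1) =
        ((3:ℤ) • (!![0, 1, 0, 0; 0, 0, 1, 0; 0, 0, 0, 1; -1, 7, -12, 7] :
        Matrix (Fin 4) (Fin 4) ℤ) ^ n) * !![0, 1, 0, 0; 0, 0, 1, 0; 0, 0, 0, 1; -1, 7, -12, 7] := by
      rw [pow_succ, smul_mul_assoc]
    rw [step, ih, add_mul, add_mul, add_mul, smul_mul_assoc, smul_mul_assoc, smul_mul_assoc,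
      mQ0, mQ1, mQ2, mQ3, hvrec n]
    push_cast
    module

/-- coprimality of a prime with a non-multiple -/
private theorem intCop {p : ℕ} (hp : p.Prime) {x : ℤ} (h : ¬((p:ℤ) ∣ x)) :
    IsCoprime (p:ℤ) x := by
  rw [Int.isCoprime_iff_gcd_eq_one]
  have h1 : Int.gcd ↑p x = Nat.gcd p x.natAbs := by simp [Int.gcd]
  rw [h1]
  exact (Nat.Prime.coprime_iff_not_dvd hp).mpr (fun hd => h (Int.natCast_dvd.mpr hd))

theorem gcd_eq (u v : ℕ → ℤ) (n : ℕ) (hn : 1 ≤ n) (a b c : ℤ)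
    (ha : 2 * a = -(u n) + v n) (hb : 3 * b = (n : ℤ) - v n) (hc : 3 * c = u n)
    (huodd : ¬(3 ∣ n) → u n % 2 = 1)
    (hP2 : ∀ s M : ℕ, 3 ∣ M → (2:ℤ)^(s+1) ∣ v (2^s * M) ∧ (2:ℤ)^(s+1) ∣ u (2^s * M))
    (hP3 : ∀ t M : ℕ, ¬(3 ∣ M) →
      ∃ e : ℤ, v (3^(t+1) * M) = 2*3^(t+1)*(M:ℤ) + 3^(t+2)*e) :
    Int.gcd (n:ℤ) (Int.gcd (u n) (v n)) = Int.gcd a (Int.gcd b c) * Nat.gcd n 3 := by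
  set g := Int.gcd a (Int.gcd b c) with hgdef
  set N := Int.gcd (n:ℤ) (Int.gcd (u n) (v n)) with hNdef
  have hga : (g:ℤ) ∣ a := (Int.gcd_dvd_left _ _)
  have hgbc : (g:ℤ) ∣ (Int.gcd b c : ℤ) := (Int.gcd_dvd_right _ _)
  have hgb : (g:ℤ) ∣ b := dvd_trans hgbc (Int.gcd_dvd_left _ _)
  have hgc : (g:ℤ) ∣ c := dvd_trans hgbc (Int.gcd_dvd_right _ _)
  have hNn : (N:ℤ) ∣ (n:ℤ) := (Int.gcd_dvd_left _ _)
  have hNuv : (N:ℤ) ∣ (Int.gcd (u n) (v n) : ℤ) := (Int.gcd_dvd_right _ _)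
  have hNu : (N:ℤ) ∣ u n := dvd_trans hNuv (Int.gcd_dvd_left _ _)
  have hNv : (N:ℤ) ∣ v n := dvd_trans hNuv (Int.gcd_dvd_right _ _)
  have hnz : n ≠ 0 := by omega
  have hNne : N ≠ 0 := by
    intro h0
    rw [hNdef] at h0
    have := (Int.gcd_eq_zero_iff.mp h0).1
    exact_mod_cast hnz (by exact_mod_cast this)
  have hgne : g ≠ 0 := by
    intro h0
    rw [hgdef] at h0
    obtain ⟨h1, h2⟩ := Int.gcd_eq_zero_iff.mp h0
    obtain ⟨h3, h4⟩ := Int.gcd_eq_zero_iff.mp (by exact_mod_cast h2)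
    have : (n:ℤ) = 0 := by omega
    exact hnz (by exact_mod_cast this)
  -- basic combos
  have hneq : (n:ℤ) = 2*a + 3*b + 3*c := by omega
  have hueq : u n = 3*c := by omega
  have hveq : v n = 2*a + 3*c := by omega
  have hN2a : (N:ℤ) ∣ 2*a := by
    have h : 2*a = v n - u n := by omega
    rw [h]; exact dvd_sub hNv hNu
  have hN3b : (N:ℤ) ∣ 3*b := by
    have h : 3*b = (n:ℤ) - v n := by omega
    rw [h]; exact dvd_sub hNn hNv
  have hN3c : (N:ℤ) ∣ 3*c := by rw [← hueq]; exact hNu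
  by_cases h3n : 3 ∣ n
  · -- case 3 ∣ n
    have hg3 : Nat.gcd n 3 = 3 :=
      Nat.dvd_antisymm (Nat.gcd_dvd_right n 3) (Nat.dvd_gcd h3n dvd_rfl)
    -- N ∣ a  (2-adic part)
    obtain ⟨t2, M2, hM2odd, hn2⟩ := Nat.exists_eq_pow_mul_and_not_dvd hnz 2 (by norm_num)
    have h3M2 : 3 ∣ M2 := by
      have hcop : Nat.Coprime 3 (2^t2) :=
        Nat.Coprime.pow_right _ (by norm_num)
      exact hcop.dvd_of_dvd_mul_left (hn2 ▸ h3n)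
    have hP2n := hP2 t2 M2 h3M2
    rw [← hn2] at hP2n
    have h2a : (2:ℤ)^t2 ∣ a := by
      have h1 : (2:ℤ)^(t2+1) ∣ 2*a := by
        have h : 2*a = v n - u n := by omega
        rw [h]; exact dvd_sub hP2n.1 hP2n.2
      have h2 : (2:ℤ)*2^t2 ∣ 2*a := by
        have e : (2:ℤ)*2^t2 = 2^(t2+1) := by ring
        rw [e]; exact h1
      exact (mul_dvd_mul_iff_left (two_ne_zero)).mp h2
    obtain ⟨j, O, hOodd, hNjO⟩ := Nat.exists_eq_pow_mul_and_not_dvd hNne 2 (by norm_num)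
    have hjt : j ≤ t2 := by
      by_contra hj
      have h1 : 2^(t2+1) ∣ n := by
        calc 2^(t2+1) ∣ 2^j := pow_dvd_pow 2 (by omega)
          _ ∣ N := ⟨O, hNjO⟩
          _ ∣ n := by exact_mod_cast Int.natCast_dvd_natCast.mp hNn
      rw [hn2] at h1
      have h2 : 2^t2*2 ∣ 2^t2*M2 := by
        have e : 2^t2*2 = 2^(t2+1) := by ring
        rw [e]; exact h1
      exact hM2odd ((Nat.mul_dvd_mul_iff_left (Nat.pow_pos (n := t2) (by norm_num))).mp h2)
    have hOa : (O:ℤ) ∣ a := by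
      have hO2 : IsCoprime ((O:ℤ)) 2 := by
        refine (intCop Nat.prime_two ?_).symm
        intro hd
        exact hOodd (by exact_mod_cast hd)
      have hON : (O:ℤ) ∣ (N:ℤ) := by
        exact_mod_cast Int.natCast_dvd_natCast.mpr ⟨2^j, by rw [hNjO]; ring⟩
      exact hO2.dvd_of_dvd_mul_left (dvd_trans hON hN2a)
    have h2ja : (2:ℤ)^j ∣ a := dvd_trans (pow_dvd_pow 2 hjt) h2a
    have hcop2O : IsCoprime ((2:ℤ)^j) (O:ℤ) := by
      refine IsCoprime.pow_left (intCop Nat.prime_two ?_)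
      intro hd
      exact hOodd (by exact_mod_cast hd)
    have hNa : (N:ℤ) ∣ a := by
      have : ((N:ℕ):ℤ) = (2:ℤ)^j * O := by rw [hNjO]; push_cast; ring
      rw [this]
      exact hcop2O.mul_dvd h2ja hOa
    -- N ∣ 3*g
    have hNg : (N:ℤ) ∣ (3*(g:ℤ)) := by
      have hinner : (Int.gcd (3*b) (3*c) : ℤ) = 3*(Int.gcd b c : ℤ) := by
        rw [Int.gcd_mul_left]; push_cast; norm_num
      have h1 : (N:ℤ) ∣ (Int.gcd (3*b) (3*c) : ℤ) := Int.dvd_coe_gcd hN3b hN3c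
      rw [hinner] at h1
      have h2 : (N:ℤ) ∣ (Int.gcd (3*a) (3*(Int.gcd b c : ℤ)) : ℤ) :=
        Int.dvd_coe_gcd (hNa.mul_left 3) h1
      have houter : (Int.gcd (3*a) (3*(Int.gcd b c : ℤ)) : ℤ) = 3*(g:ℤ) := by
        rw [Int.gcd_mul_left]; push_cast; norm_num; rfl
      rwa [houter] at h2
    -- 3*g ∣ N
    obtain ⟨T, M, hM3, hnTM⟩ := Nat.exists_eq_pow_mul_and_not_dvd hnz 3 (by norm_num)
    obtain ⟨t, rfl⟩ : ∃ t, T = t + 1 := by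
      rcases T with _ | t
      · exfalso; apply hM3; simpa [hnTM] using h3n
      · exact ⟨t, rfl⟩
    obtain ⟨e, hve⟩ := hP3 t M hM3
    rw [← hnTM] at hve
    obtain ⟨s, h, h3h, hgsh⟩ := Nat.exists_eq_pow_mul_and_not_dvd hgne 3 (by norm_num)
    have hsb : (3:ℤ)^(s+1) ∣ 3*b := by
      have h1 : ((3:ℕ)^s : ℤ) ∣ b := dvd_trans (by exact_mod_cast Int.natCast_dvd_natCast.mpr ⟨h, hgsh⟩) hgb
      have e1 : (3:ℤ)^(s+1) = 3 * 3^s := by ring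
      rw [e1]
      exact mul_dvd_mul_left 3 (by exact_mod_cast h1)
    have hst : s ≤ t := by
      by_contra hs
      have h1 : (3:ℤ)^(t+2) ∣ 3*b := dvd_trans (pow_dvd_pow 3 (by omega)) hsb
      have h2 : 3*b = -((3:ℤ)^(t+1) * ((M:ℤ) + 3*e)) := by
        have hncast : (n:ℤ) = 3^(t+1) * (M:ℤ) := by rw [hnTM]; push_cast; ring
        rw [show 3*b = (n:ℤ) - v n by omega, hncast, hve]; ring
      rw [h2, dvd_neg] at h1
      have h3 : (3:ℤ)^(t+1)*3 ∣ (3:ℤ)^(t+1)*((M:ℤ) + 3*e) := by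
        have e1 : (3:ℤ)^(t+1)*3 = 3^(t+2) := by ring
        rw [e1]; exact h1
      have h4 : (3:ℤ) ∣ (M:ℤ) + 3*e :=
        (mul_dvd_mul_iff_left (pow_ne_zero (t+1) (by norm_num : (3:ℤ) ≠ 0))).mp h3
      have h5 : (3:ℤ) ∣ (M:ℤ) := by
        obtain ⟨w, hw⟩ := h4
        exact ⟨w - e, by linarith⟩
      exact hM3 (by exact_mod_cast h5)
    have hncast : (n:ℤ) = 3^(t+1) * (M:ℤ) := by rw [hnTM]; push_cast; ring
    have h3s1n : (3:ℤ)^(s+1) ∣ (n:ℤ) := by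
      rw [hncast]
      exact Dvd.dvd.mul_right (pow_dvd_pow 3 (by omega)) _
    have h3s1v : (3:ℤ)^(s+1) ∣ v n := by
      rw [show v n = (n:ℤ) - 3*b by omega]
      exact dvd_sub h3s1n hsb
    have hcop3h : IsCoprime ((3:ℤ)^(s+1)) ((h:ℕ):ℤ) := by
      refine IsCoprime.pow_left (intCop Nat.prime_three ?_)
      intro hd
      exact h3h (by exact_mod_cast hd)
    have hhg : ((h:ℕ):ℤ) ∣ (g:ℤ) := by exact_mod_cast Int.natCast_dvd_natCast.mpr ⟨3^s, by rw [hgsh]; ring⟩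
    have h3gcast : (3*(g:ℤ)) = (3:ℤ)^(s+1) * (h:ℤ) := by
      rw [hgsh]; push_cast; ring
    have hgN : (3*(g:ℤ)) ∣ (N:ℤ) := by
      have hdn : (3*(g:ℤ)) ∣ (n:ℤ) := by
        rw [h3gcast]
        exact hcop3h.mul_dvd h3s1n (dvd_trans hhg (by rw [hneq]; exact dvd_add (dvd_add (hga.mul_left 2) (hgb.mul_left 3)) (hgc.mul_left 3)))
      have hdu : (3*(g:ℤ)) ∣ u n := by
        rw [hueq]
        exact mul_dvd_mul_left 3 hgc
      have hdv : (3*(g:ℤ)) ∣ v n := by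
        rw [h3gcast]
        exact hcop3h.mul_dvd h3s1v (dvd_trans hhg (by rw [hveq]; exact dvd_add (hga.mul_left 2) (hgc.mul_left 3)))
      exact Int.dvd_coe_gcd hdn (Int.dvd_coe_gcd hdu hdv)
    -- combine
    rw [hg3]
    have h1 : N ∣ g * 3 := by
      have h' : (N:ℤ) ∣ ((g:ℤ) * 3) := by rwa [mul_comm] at hNg
      exact_mod_cast h'
    have h2 : g * 3 ∣ N := by
      have h' : ((g:ℤ) * 3) ∣ (N:ℤ) := by rwa [mul_comm] at hgN
      exact_mod_cast h'
    exact Nat.dvd_antisymm h1 h2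
  · -- case ¬ 3 ∣ n
    have hg3 : Nat.gcd n 3 = 1 := by
      have h1 := Nat.gcd_dvd_right n 3
      have h2 := Nat.gcd_dvd_left n 3
      rcases (Nat.Prime.eq_one_or_self_of_dvd Nat.prime_three _ h1) with h | h
      · exact h
      · exfalso; exact h3n (h ▸ h2)
    rw [hg3, Nat.mul_one]
    -- ¬3∣N, ¬2∣N
    have hN3 : ¬((3:ℤ) ∣ (N:ℤ)) := by
      intro hd
      apply h3n
      have : (3:ℤ) ∣ (n:ℤ) := dvd_trans hd hNn
      exact_mod_cast this
    have hN2 : ¬((2:ℤ) ∣ (N:ℤ)) := by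
      intro hd
      have h1 : (2:ℤ) ∣ u n := dvd_trans hd hNu
      have h2 := huodd h3n
      omega
    have hcop3N : IsCoprime (3:ℤ) (N:ℤ) := intCop Nat.prime_three hN3
    have hcop2N : IsCoprime (2:ℤ) (N:ℤ) := intCop Nat.prime_two hN2
    have hNa : (N:ℤ) ∣ a := hcop2N.symm.dvd_of_dvd_mul_left hN2a
    have hNb : (N:ℤ) ∣ b := hcop3N.symm.dvd_of_dvd_mul_left hN3b
    have hNc : (N:ℤ) ∣ c := hcop3N.symm.dvd_of_dvd_mul_left hN3c
    have hNg : (N:ℤ) ∣ (g:ℤ) := Int.dvd_coe_gcd hNa (Int.dvd_coe_gcd hNb hNc)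
    have hgN : (g:ℤ) ∣ (N:ℤ) := by
      refine Int.dvd_coe_gcd ?_ (Int.dvd_coe_gcd ?_ ?_)
      · rw [hneq]; exact dvd_add (dvd_add (hga.mul_left 2) (hgb.mul_left 3)) (hgc.mul_left 3)
      · rw [hueq]; exact hgc.mul_left 3
      · rw [hveq]; exact dvd_add (hga.mul_left 2) (hgc.mul_left 3)
    exact Nat.dvd_antisymm (Int.natCast_dvd_natCast.mp hNg) (Int.natCast_dvd_natCast.mp hgN)

/-- Every entry of `B n = Qⁿ - I₄`, `Q` the companion matrix of `z⁴ - 7z³ + 12z² - 7z + 1`,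
is an integer linear combination of `a = (-u+v)/2`, `b = (n-v)/3`, `c = u/3`, where
`u = 2·T_n(5/2) - 2` and `v = U_{n-1}(5/2)`; the ideal generated by the entries equals the
ideal generated by `a, b, c`, and the gcd of all entries equals `gcd(n,u,v)/gcd(n,3)`. -/
theorem entries_of_B_span (u v : ℕ → ℤ)
    (hu0 : u 0 = 0) (hu1 : u 1 = 3)
    (hurec : ∀ k : ℕ, u (k + 2) = 5 * u (k + 1) - u k + 6)
    (hv0 : v 0 = 0) (hv1 : v 1 = 1)
    (hvrec : ∀ k : ℕ, v (k + 2) = 5 * v (k + 1) - v k)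
    (n : ℕ) (hn : 1 ≤ n) (a b c : ℤ)
    (ha : 2 * a = -(u n) + v n) (hb : 3 * b = (n : ℤ) - v n) (hc : 3 * c = u n)
    (B : Matrix (Fin 4) (Fin 4) ℤ)
    (hB : B = (!![0, 1, 0, 0; 0, 0, 1, 0; 0, 0, 0, 1; -1, 7, -12, 7] :
      Matrix (Fin 4) (Fin 4) ℤ) ^ n - 1) :
    (∀ i j : Fin 4, ∃ p q r : ℤ, B i j = p * a + q * b + r * c) ∧
    Ideal.span {x : ℤ | ∃ i j : Fin 4, x = B i j} = Ideal.span {a, b, c} ∧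
    (∀ d : ℤ, (∀ i j : Fin 4, d ∣ B i j) ↔
      d ∣ ((Int.gcd (n : ℤ) (Int.gcd (u n) (v n)) / Nat.gcd n 3 : ℕ) : ℤ)) := by
  -- derived identities
  have grand := seq_grand u v hu0 hu1 hurec hv0 hv1 hvrec
  have hU : ∀ r : ℕ, u r = 2 * v (r+1) - 5 * v r - 2 := fun r => (grand r).2.1
  have hd0 : ∀ r : ℕ, v (2*r) = v r * (u r + 2) := fun r => by
    rw [(grand r).2.2.2.1, hU r]; ring
  have hd1 : ∀ r : ℕ, u (2*r) = 21 * (v r * v r) := fun r => by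
    rw [hU (2*r), (grand r).2.2.2.2.1, (grand r).2.2.2.1]
    linear_combination 2 * (grand r).1
  have ht0 : ∀ r : ℕ, v (3*r) = 21*(v r)^3 + 3*(v r) := fun r => (grand r).2.2.2.2.2.1
  -- modular facts
  have MOD := seq_mod u v hu0 hu1 hurec hv0 hv1 hvrec
  have hres : ∀ m : ℕ, (3 ∣ m ∧ u m % 18 = 0 ∧ v m % 6 = 0) ∨
      (¬(3 ∣ m) ∧ u m % 18 = 3 ∧ ((m % 3 = 1 ∧ v m % 6 = 1) ∨ (m % 3 = 2 ∧ v m % 6 = 5))) := by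
    intro m
    obtain ⟨q, hq⟩ : ∃ q, m = 3*q ∨ m = 3*q+1 ∨ m = 3*q+2 := ⟨m/3, by omega⟩
    obtain ⟨m0, m1, m2, m3, m4, m5⟩ := MOD q
    rcases hq with h | h | h <;> subst h
    · exact Or.inl ⟨⟨q, rfl⟩, m0, m3⟩
    · exact Or.inr ⟨by omega, m1, Or.inl ⟨by omega, m4⟩⟩
    · exact Or.inr ⟨by omega, m2, Or.inr ⟨by omega, m5⟩⟩
  have huodd : ∀ m : ℕ, ¬(3 ∣ m) → u m % 2 = 1 := by
    intro m hm
    rcases hres m with ⟨h1, _, _⟩ | ⟨_, h2, _⟩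
    · exact absurd h1 hm
    · omega
  have hpar : ∀ m : ℕ, 3 ∣ m → (2:ℤ) ∣ v m ∧ (2:ℤ) ∣ u m := by
    intro m hm
    rcases hres m with ⟨_, h2, h3⟩ | ⟨h1, _, _⟩
    · omega
    · exact absurd hm h1
  have hv3 : ∀ m : ℕ, ∃ z : ℤ, v m = (m:ℤ) + 3*z := by
    intro m
    have hd : (3:ℤ) ∣ v m - (m:ℤ) := by
      rcases hres m with ⟨h1, h2, h3⟩ | ⟨h1, h2, h3⟩
      · omega
      · rcases h3 with ⟨h3, h4⟩ | ⟨h3, h4⟩ <;> omega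
    obtain ⟨z, hz⟩ := hd
    exact ⟨z, by linarith⟩
  have hP2 := seq_P2 u v hd0 hd1 hpar
  have hP3 := seq_P3 v ht0 hv3
  have hgcdEq := gcd_eq u v n hn a b c ha hb hc (huodd n) hP2 hP3
  have h3pos : 0 < Nat.gcd n 3 := Nat.gcd_pos_of_pos_right n (by norm_num)
  have hfin : ((Int.gcd (n:ℤ) (Int.gcd (u n) (v n)) / Nat.gcd n 3 : ℕ) : ℤ) =
      ((Int.gcd a (Int.gcd b c) : ℕ) : ℤ) := by
    have h1 : Int.gcd (n:ℤ) (Int.gcd (u n) (v n)) / Nat.gcd n 3 = Int.gcd a (Int.gcd b c) := by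
      rw [hgcdEq]; exact Nat.mul_div_cancel _ h3pos
    exact_mod_cast congrArg (fun x : ℕ => (x : ℤ)) h1
  -- matrix entry formulas
  have key := mat_form v hv0 hv1 hvrec n
  have hent : ∀ i j : Fin 4,
      3 * (((!![0, 1, 0, 0; 0, 0, 1, 0; 0, 0, 0, 1; -1, 7, -12, 7] :
        Matrix (Fin 4) (Fin 4) ℤ) ^ n) i j) =
      (!![-2,11,-7,1; -1,5,-1,0; 0,-1,5,-1; 1,-7,11,-2] : Matrix (Fin 4) (Fin 4) ℤ) i j
      + (n:ℤ) * (!![1,-6,6,-1; 1,-6,6,-1; 1,-6,6,-1; 1,-6,6,-1] : Matrix (Fin 4) (Fin 4) ℤ) i j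
      + v n * (!![-24,53,-34,5; -5,11,-7,1; -1,2,-1,0; 0,-1,2,-1] : Matrix (Fin 4) (Fin 4) ℤ) i j
      + v (n+1) * (!![5,-11,7,-1; 1,-2,1,0; 0,1,-2,1; -1,7,-11,5] : Matrix (Fin 4) (Fin 4) ℤ) i j := by
    intro i j
    have h := congrFun (congrFun key i) j
    simp only [Matrix.add_apply, Matrix.smul_apply, smul_eq_mul] at h
    exact h
  have hlin : ∀ i j : Fin 4, B i j =
      (!![-7,13,-7,1; -1,0,1,0; 0,-1,0,1; -1,7,-13,7] : Matrix (Fin 4) (Fin 4) ℤ) i j * a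
      + (!![1,-6,6,-1; 1,-6,6,-1; 1,-6,6,-1; 1,-6,6,-1] : Matrix (Fin 4) (Fin 4) ℤ) i j * b
      + (!![-8,14,-7,1; -1,-1,2,0; 0,-1,-1,2; -2,14,-25,13] : Matrix (Fin 4) (Fin 4) ℤ) i j * c := by
    intro i j
    have h := hent i j
    have hB' : B i j = ((!![0, 1, 0, 0; 0, 0, 1, 0; 0, 0, 0, 1; -1, 7, -12, 7] :
        Matrix (Fin 4) (Fin 4) ℤ) ^ n) i j - (1 : Matrix (Fin 4) (Fin 4) ℤ) i j := by
      rw [hB, Matrix.sub_apply]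
    have hUn := hU n
    fin_cases i <;> fin_cases j <;>
      [skip; skip; skip; skip; skip; skip; skip; skip; skip; skip; skip; skip; skip; skip;
        skip; skip] <;>
      (simp [Matrix.cons_val_succ, Matrix.head_cons, Matrix.vecTail, Matrix.vecHead,
        Matrix.one_apply] at h hB' ⊢) <;> omega
  -- explicit entries used for the reverse inclusion
  have e10 : B 1 0 = -a + b - c := by
    have h := hlin 1 0
    simp [Matrix.cons_val_succ, Matrix.head_cons, Matrix.vecTail, Matrix.vecHead] at h
    omega
  have e12 : B 1 2 = a + 6*b + 2*c := by
    have h := hlin 1 2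
    simp [Matrix.cons_val_succ, Matrix.head_cons, Matrix.vecTail, Matrix.vecHead] at h
    omega
  have e13 : B 1 3 = -b := by
    have h := hlin 1 3
    simp [Matrix.cons_val_succ, Matrix.head_cons, Matrix.vecTail, Matrix.vecHead] at h
    omega
  have e21 : B 2 1 = -a - 6*b - c := by
    have h := hlin 2 1
    simp [Matrix.cons_val_succ, Matrix.head_cons, Matrix.vecTail, Matrix.vecHead] at h
    omega
  refine ⟨?_, ?_, ?_⟩
  · intro i j
    exact ⟨_, _, _, hlin i j⟩
  · apply le_antisymm
    · rw [Ideal.span_le]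
      rintro x ⟨i, j, rfl⟩
      rw [hlin i j]
      refine Ideal.add_mem _ (Ideal.add_mem _ ?_ ?_) ?_
      · exact Ideal.mul_mem_left _ _ (Ideal.subset_span (by simp))
      · exact Ideal.mul_mem_left _ _ (Ideal.subset_span (by simp))
      · exact Ideal.mul_mem_left _ _ (Ideal.subset_span (by simp))
    · rw [Ideal.span_le]
      have mem : ∀ i j : Fin 4, B i j ∈ Ideal.span {x : ℤ | ∃ i j : Fin 4, x = B i j} :=
        fun i j => Ideal.subset_span ⟨i, j, rfl⟩
      intro x hx
      simp only [Set.mem_insert_iff, Set.mem_singleton_iff] at hx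
      rcases hx with rfl | rfl | rfl
      · rw [show x = -B 1 0 - B 1 2 - B 2 1 - B 1 3 from by omega]
        exact sub_mem (sub_mem (sub_mem (neg_mem (mem 1 0)) (mem 1 2)) (mem 2 1)) (mem 1 3)
      · rw [show x = -B 1 3 from by omega]
        exact neg_mem (mem 1 3)
      · rw [show x = B 1 2 + B 2 1 from by omega]
        exact add_mem (mem 1 2) (mem 2 1)
  · intro d
    constructor
    · intro hd
      have hda : d ∣ a := by
        rw [show a = -B 1 0 - B 1 2 - B 2 1 - B 1 3 from by omega]
        exact dvd_sub (dvd_sub (dvd_sub (dvd_neg.mpr (hd 1 0)) (hd 1 2)) (hd 2 1)) (hd 1 3)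
      have hdb : d ∣ b := by
        rw [show b = -B 1 3 from by omega]
        exact dvd_neg.mpr (hd 1 3)
      have hdc : d ∣ c := by
        rw [show c = B 1 2 + B 2 1 from by omega]
        exact dvd_add (hd 1 2) (hd 2 1)
      rw [hfin]
      exact Int.dvd_coe_gcd hda (Int.dvd_coe_gcd hdb hdc)
    · intro hd i j
      rw [hfin] at hd
      have hda : d ∣ a := dvd_trans hd (Int.gcd_dvd_left _ _)
      have hdbc : d ∣ ((Int.gcd b c : ℕ) : ℤ) := dvd_trans hd (Int.gcd_dvd_right _ _)
      have hdb : d ∣ b := dvd_trans hdbc (Int.gcd_dvd_left _ _)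
      have hdc : d ∣ c := dvd_trans hdbc (Int.gcd_dvd_right _ _)
      rw [hlin i j]
      exact dvd_add (dvd_add (hda.mul_left _) (hdb.mul_left _)) (hdc.mul_left _)
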